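/- arXiv:2108.04564 — 4 statements merged into one kernel-verified Lean document; each statement's English description precedes it below -/
import Mathlib

section
/- For a finite simple graph G with an injective edge ranking π, there is at most one matching with the LFMM property. That is, if M₁ and M₂ are matchings in G such that every edge of G is either in Mᵢ or covered by Mᵢ (for i = 1, 2), then M₁ = M₂. -/
variable {V : Type*}

/-- Two distinct edges are adjacent if they share an endpoint. -/
def EdgeAdj (e f : Sym2 V) : Prop := e ≠ f ∧ ∃ v, v ∈ e ∧ v ∈ f

/-- `M` is a matching in `G`: a set of pairwise non-adjacent edges of `G`. -/
def IsMatchingIn (G : SimpleGraph V) (M : Set (Sym2 V)) : Prop :=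
  M ⊆ G.edgeSet ∧ ∀ e ∈ M, ∀ f ∈ M, ¬ EdgeAdj e f

/-- The edge `f` is covered by `M` (w.r.t. the ranking `π`): some edge of `M`
is adjacent to `f` and has strictly smaller rank. -/
def CoveredBy (π : Sym2 V → ℝ) (M : Set (Sym2 V)) (f : Sym2 V) : Prop :=
  ∃ e ∈ M, EdgeAdj e f ∧ π e < π f

/-- `M` has the LFMM property in `G`: it is a matching and every edge of `G`
is either in `M` or covered by `M`. -/
def HasLFMM (G : SimpleGraph V) (π : Sym2 V → ℝ) (M : Set (Sym2 V)) : Prop :=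
  IsMatchingIn G M ∧ ∀ f ∈ G.edgeSet, f ∈ M ∨ CoveredBy π M f


private lemma lfmm_aux {G : SimpleGraph V} {π : Sym2 V → ℝ} {M₁ M₂ : Set (Sym2 V)}
    (h₁ : HasLFMM G π M₁) (h₂ : HasLFMM G π M₂) {e : Sym2 V}
    (he1 : e ∈ M₁) (he2 : e ∉ M₂)
    (hmin : ∀ f, ((f ∈ M₁ ∧ f ∉ M₂) ∨ (f ∈ M₂ ∧ f ∉ M₁)) → π e ≤ π f) : False := by
  have heG : e ∈ G.edgeSet := h₁.1.1 he1
  rcases h₂.2 e heG with h | ⟨f, hf, hadj, hlt⟩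
  · exact he2 h
  · have hfM₁ : f ∈ M₁ := by
      by_contra hf1
      exact absurd (hmin f (Or.inr ⟨hf, hf1⟩)) (not_le.2 hlt)
    exact h₁.1.2 f hfM₁ e he1 hadj

/-- There is at most one matching with the LFMM property. -/
theorem lfmm_unique [Finite V] (G : SimpleGraph V) (π : Sym2 V → ℝ)
    (hπ : Set.InjOn π G.edgeSet) (M₁ M₂ : Set (Sym2 V))
    (h₁ : HasLFMM G π M₁) (h₂ : HasLFMM G π M₂) : M₁ = M₂ := by
  by_contra hne
  have hD : ((M₁ \ M₂) ∪ (M₂ \ M₁)).Nonempty := by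
    by_contra h
    apply hne
    ext x
    constructor <;> intro hx <;> by_contra hx2
    · exact h ⟨x, Or.inl ⟨hx, hx2⟩⟩
    · exact h ⟨x, Or.inr ⟨hx, hx2⟩⟩
  obtain ⟨e, heD, hmin⟩ := Set.exists_min_image _ π (Set.toFinite _) hD
  have hmin' : ∀ f, ((f ∈ M₁ ∧ f ∉ M₂) ∨ (f ∈ M₂ ∧ f ∉ M₁)) → π e ≤ π f := by
    rintro f (⟨h1, h2⟩ | ⟨h1, h2⟩)
    · exact hmin f (Or.inl ⟨h1, h2⟩)
    · exact hmin f (Or.inr ⟨h1, h2⟩)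
  have hmin'' : ∀ f, ((f ∈ M₂ ∧ f ∉ M₁) ∨ (f ∈ M₁ ∧ f ∉ M₂)) → π e ≤ π f := by
    rintro f (h | h)
    · exact hmin' f (Or.inr h)
    · exact hmin' f (Or.inl h)
  rcases heD with ⟨he1, he2⟩ | ⟨he1, he2⟩
  · exact lfmm_aux h₁ h₂ he1 he2 hmin'
  · exact lfmm_aux h₂ h₁ he1 he2 hmin''
end

section
/- Let G be a finite simple graph with injective edge ranking π, let e be a new edge not in E, and extend π injectively to E ∪ {e}. If M is a matching with the LFMM property in G and M' is a matching with the LFMM property in G + e, then M and M' agree on all edges of rank less than π(e): for every f ∈ E with π(f) < π(e), f ∈ M if and only if f ∈ M'. That is, inserting an edge can only change the lexicographically first maximal matching on edges of larger rank. -/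
variable {V : Type*}

lemma mem_lfmm_iff {G : SimpleGraph V} {π : Sym2 V → ℝ} {M : Set (Sym2 V)}
    (h : HasLFMM G π M) {f : Sym2 V} (hf : f ∈ G.edgeSet) :
    f ∈ M ↔ ¬ CoveredBy π M f := by
  constructor
  · rintro hfM ⟨g, hgM, hadj, _⟩
    exact h.1.2 g hgM f hfM hadj
  · intro hnc
    rcases h.2 f hf with h' | h'
    · exact h'
    · exact absurd h' hnc

/-- Inserting an edge can only change the LFMM on edges of larger rank. -/
theorem lfmm_insert_agree_below [Finite V] (G : SimpleGraph V) (π : Sym2 V → ℝ)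
    (M M' : Set (Sym2 V)) (u v : V) (huv : u ≠ v) (he : s(u, v) ∉ G.edgeSet)
    (hπ : Set.InjOn π (insert s(u, v) G.edgeSet))
    (hM : HasLFMM G π M)
    (hM' : HasLFMM (SimpleGraph.fromEdgeSet (insert s(u, v) G.edgeSet)) π M') :
    ∀ f ∈ G.edgeSet, π f < π s(u, v) → (f ∈ M ↔ f ∈ M') := by
  classical
  haveI : Fintype V := Fintype.ofFinite V
  have hedge : (SimpleGraph.fromEdgeSet (insert s(u, v) G.edgeSet)).edgeSet
      = insert s(u, v) G.edgeSet := by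
    rw [SimpleGraph.edgeSet_fromEdgeSet]
    rw [sdiff_eq_self_iff_disjoint, Set.disjoint_left]
    rintro g hg2 hg1
    rcases hg1 with rfl | hg1
    · simp only [Sym2.mem_diagSet, Set.mem_setOf_eq, Sym2.isDiag_iff_proj_eq] at hg2
      exact huv hg2
    · exact (G.not_isDiag_of_mem_edgeSet hg1) hg2
  have main : ∀ n : ℕ, ∀ f ∈ G.edgeSet, π f < π s(u, v) →
      (Finset.univ.filter (fun g : Sym2 V => π g < π f)).card = n → (f ∈ M ↔ f ∈ M') := by
    intro n
    induction n using Nat.strong_induction_on with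
    | _ n ih =>
      intro f hf hfe hcard
      have hf' : f ∈ (SimpleGraph.fromEdgeSet (insert s(u, v) G.edgeSet)).edgeSet := by
        rw [hedge]; exact Set.mem_insert_of_mem _ hf
      rw [mem_lfmm_iff hM hf, mem_lfmm_iff hM' hf']
      have ihg : ∀ g : Sym2 V, g ∈ G.edgeSet → π g < π f → (g ∈ M ↔ g ∈ M') := by
        intro g hg hgf
        refine ih _ ?_ g hg (hgf.trans hfe) rfl
        rw [← hcard]
        apply Finset.card_lt_card
        refine ⟨fun x hx => ?_, fun hsub => ?_⟩
        · simp only [Finset.mem_filter, Finset.mem_univ, true_and] at hx ⊢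
          exact hx.trans hgf
        · have := hsub (by simp [hgf] : g ∈ Finset.univ.filter (fun x : Sym2 V => π x < π f))
          simp at this
      constructor
      · rintro hnc ⟨g, hgM', hadj, hgf⟩
        apply hnc
        have hgE : g ∈ insert s(u, v) G.edgeSet := hedge ▸ hM'.1.1 hgM'
        rcases hgE with rfl | hgE
        · exact absurd (hgf.trans hfe) (lt_irrefl _)
        · exact ⟨g, (ihg g hgE hgf).2 hgM', hadj, hgf⟩
      · rintro hnc ⟨g, hgM, hadj, hgf⟩
        exact hnc ⟨g, (ihg g (hM.1.1 hgM) hgf).1 hgM, hadj, hgf⟩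
  intro f hf hfe
  exact main _ f hf hfe rfl
end

section
/- Let G be a finite simple graph with injective edge ranking π and let e ∈ E. If M is a matching with the LFMM property in G and M' is a matching with the LFMM property in G − e, then M and M' agree on all edges of rank less than π(e): for every f ∈ E \ {e} with π(f) < π(e), f ∈ M if and only if f ∈ M'. That is, deleting an edge can only change the lexicographically first maximal matching on edges of larger rank. -/
variable {V : Type*}

/-- Deleting an edge can only change the LFMM on edges of larger rank. -/
theorem lfmm_delete_agree_below [Finite V] (G : SimpleGraph V) (π : Sym2 V → ℝ)
    (hπ : Set.InjOn π G.edgeSet) (M M' : Set (Sym2 V))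
    (e : Sym2 V) (heE : e ∈ G.edgeSet)
    (hM : HasLFMM G π M) (hM' : HasLFMM (G.deleteEdges {e}) π M') :
    ∀ f ∈ G.edgeSet, f ≠ e → π f < π e → (f ∈ M ↔ f ∈ M') := by
  classical
  have hfin : G.edgeSet.Finite := Set.toFinite _
  set s := hfin.toFinset with hs
  have key : ∀ n f, (s.filter (fun g => π g < π f)).card = n →
      f ∈ G.edgeSet → f ≠ e → π f < π e → (f ∈ M ↔ f ∈ M') := by
    intro n
    induction n using Nat.strong_induction_on with
    | _ n ih =>
      intro f hcard hf hfe hflt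
      have IH : ∀ g, g ∈ G.edgeSet → π g < π f → g ≠ e → (g ∈ M ↔ g ∈ M') := by
        intro g hg hglt hge
        refine ih _ ?_ _ rfl hg hge (hglt.trans hflt)
        rw [← hcard]
        apply Finset.card_lt_card
        constructor
        · intro x hx
          simp only [Finset.mem_filter] at hx ⊢
          exact ⟨hx.1, hx.2.trans hglt⟩
        · intro hsub
          have hgmem : g ∈ s.filter (fun x => π x < π f) := by
            simp [hs, Set.Finite.mem_toFinset, hg, hglt]
          have := hsub hgmem
          simp only [Finset.mem_filter] at this
          exact absurd this.2 (lt_irrefl _)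
      constructor
      · intro hfM
        by_contra hfM'
        have hfE' : f ∈ (G.deleteEdges {e}).edgeSet := by
          rw [SimpleGraph.edgeSet_deleteEdges]
          exact ⟨hf, by simpa using hfe⟩
        rcases hM'.2 f hfE' with h | ⟨g, hgM', hadj, hglt⟩
        · exact hfM' h
        · have hgE' := hM'.1.1 hgM'
          rw [SimpleGraph.edgeSet_deleteEdges] at hgE'
          have hge : g ≠ e := by simpa using hgE'.2
          have hgM : g ∈ M := (IH g hgE'.1 hglt hge).mpr hgM'
          exact hM.1.2 g hgM f hfM hadj
      · intro hfM'
        by_contra hfM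
        rcases hM.2 f hf with h | ⟨g, hgM, hadj, hglt⟩
        · exact hfM h
        · have hgE : g ∈ G.edgeSet := hM.1.1 hgM
          have hge : g ≠ e := by
            intro h; subst h
            exact absurd (hglt.trans hflt) (lt_irrefl _)
          have hgM' : g ∈ M' := (IH g hgE hglt hge).mp hgM
          exact hM'.1.2 g hgM' f hfM' hadj
  intro f hf hfe hflt
  exact key _ f rfl hf hfe hflt
end

section
/- Let G be a finite simple graph with injective edge ranking π and let M be a matching with the LFMM property in G. Let e = {u, v} be a new edge not in E, with π extended injectively to E ∪ {e}, and suppose π(e) < π(f) for every edge f ∈ M incident to u or v. Let D be the set of edges of M incident to u or v (so |D| ≤ 2) and set M' = (M \ D) ∪ {e}. Then M' is a matching in G + e, and every edge f ∈ (E ∪ {e}) \ M' that is not covered by M' is adjacent to some edge d ∈ D at the endpoint of d other than u or v, and satisfies π(f) > π(d) > π(e). In particular, all edges of rank at most π(e) are covered by M' in G + e. -/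
variable {V : Type*}

/-- Inserting an edge of lower rank than all matching edges at its endpoints:
`M' = (M \ D) ∪ {e}` is a matching in `G + e`, any uncovered edge is adjacent
to some `d ∈ D` at the endpoint of `d` other than `u, v` with
`π f > π d > π e`; in particular all edges of rank at most `π e` are covered. -/
theorem lfmm_insert_low_rank [Finite V] (G : SimpleGraph V) (π : Sym2 V → ℝ)
    (M : Set (Sym2 V)) (u v : V) (huv : u ≠ v) (he : s(u, v) ∉ G.edgeSet)
    (hπ : Set.InjOn π (insert s(u, v) G.edgeSet))
    (hM : HasLFMM G π M)
    (hrank : ∀ f ∈ M, (u ∈ f ∨ v ∈ f) → π s(u, v) < π f) :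
    IsMatchingIn (SimpleGraph.fromEdgeSet (insert s(u, v) G.edgeSet))
        (insert s(u, v) (M \ {d ∈ M | u ∈ d ∨ v ∈ d})) ∧
    (∀ f ∈ (SimpleGraph.fromEdgeSet (insert s(u, v) G.edgeSet)).edgeSet,
        f ∉ insert s(u, v) (M \ {d ∈ M | u ∈ d ∨ v ∈ d}) →
        ¬ CoveredBy π (insert s(u, v) (M \ {d ∈ M | u ∈ d ∨ v ∈ d})) f →
        ∃ d ∈ {d ∈ M | u ∈ d ∨ v ∈ d},
          (∃ w, w ∈ d ∧ w ∈ f ∧ w ≠ u ∧ w ≠ v) ∧ π s(u, v) < π d ∧ π d < π f) ∧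
    (∀ f ∈ (SimpleGraph.fromEdgeSet (insert s(u, v) G.edgeSet)).edgeSet,
        π f ≤ π s(u, v) →
        f ∈ insert s(u, v) (M \ {d ∈ M | u ∈ d ∨ v ∈ d}) ∨
        CoveredBy π (insert s(u, v) (M \ {d ∈ M | u ∈ d ∨ v ∈ d})) f) := by
  obtain ⟨⟨hMsub, hMadj⟩, hMcov⟩ := hM
  set e := s(u, v) with he_def
  set D := {d ∈ M | u ∈ d ∨ v ∈ d} with hD
  set M' := insert e (M \ D) with hM'def
  have hedge : (SimpleGraph.fromEdgeSet (insert e G.edgeSet)).edgeSet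
      = insert e G.edgeSet := by
    rw [SimpleGraph.edgeSet_fromEdgeSet]
    ext f
    simp only [Set.mem_diff, Set.mem_setOf_eq, and_iff_left_iff_imp]
    rintro (rfl | hf)
    · exact fun hd => huv (Sym2.mk_isDiag_iff.mp hd)
    · exact G.not_isDiag_of_mem_edgeSet hf
  have hue : u ∈ e := by simp [he_def]
  have hve : v ∈ e := by simp [he_def]
  have hmatch : IsMatchingIn (SimpleGraph.fromEdgeSet (insert e G.edgeSet)) M' := by
    constructor
    · intro f hf
      rw [hedge]
      rcases hf with rfl | hf
      · exact Set.mem_insert _ _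
      · exact Set.mem_insert_of_mem _ (hMsub hf.1)
    · rintro a ha b hb ⟨hab, w, hwa, hwb⟩
      rcases ha with rfl | ha
      · rcases hb with rfl | hb
        · exact hab rfl
        · rcases Sym2.mem_iff.mp hwa with rfl | rfl
          · exact hb.2 ⟨hb.1, Or.inl hwb⟩
          · exact hb.2 ⟨hb.1, Or.inr hwb⟩
      · rcases hb with rfl | hb
        · rcases Sym2.mem_iff.mp hwb with rfl | rfl
          · exact ha.2 ⟨ha.1, Or.inl hwa⟩
          · exact ha.2 ⟨ha.1, Or.inr hwa⟩
        · exact hMadj a ha.1 b hb.1 ⟨hab, w, hwa, hwb⟩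
  have key : ∀ f ∈ (SimpleGraph.fromEdgeSet (insert e G.edgeSet)).edgeSet,
      f ∉ M' → ¬ CoveredBy π M' f →
      ∃ d ∈ D, (∃ w, w ∈ d ∧ w ∈ f ∧ w ≠ u ∧ w ≠ v) ∧ π e < π d ∧ π d < π f := by
    intro f hf hfM' hfcov
    rw [hedge] at hf
    have hfne : f ≠ e := by rintro rfl; exact hfM' (Set.mem_insert _ _)
    have hfG : f ∈ G.edgeSet := hf.resolve_left hfne
    have hcov_by_e : (u ∈ f ∨ v ∈ f) → π e < π f → False := by
      rintro huvf hlt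
      refine hfcov ⟨e, Set.mem_insert _ _, ⟨hfne.symm, ?_⟩, hlt⟩
      rcases huvf with h | h
      · exact ⟨u, hue, h⟩
      · exact ⟨v, hve, h⟩
    have hfnotM : f ∉ M := by
      intro hfM
      have hfD : f ∈ D := by
        by_contra hfD
        exact hfM' (Set.mem_insert_of_mem _ ⟨hfM, hfD⟩)
      exact hcov_by_e hfD.2 (hrank f hfM hfD.2)
    obtain ⟨d, hdM, ⟨hdf, w, hwd, hwf⟩, hπdf⟩ := (hMcov f hfG).resolve_left hfnotM
    have hdD : d ∈ D := by
      by_contra hdD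
      exact hfcov ⟨d, Set.mem_insert_of_mem _ ⟨hdM, hdD⟩, ⟨hdf, w, hwd, hwf⟩, hπdf⟩
    have hπed : π e < π d := hrank d hdM hdD.2
    have hwu : w ≠ u := by rintro rfl; exact hcov_by_e (Or.inl hwf) (hπed.trans hπdf)
    have hwv : w ≠ v := by rintro rfl; exact hcov_by_e (Or.inr hwf) (hπed.trans hπdf)
    exact ⟨d, hdD, ⟨w, hwd, hwf, hwu, hwv⟩, hπed, hπdf⟩
  refine ⟨hmatch, key, ?_⟩
  intro f hf hπf
  by_contra h
  push_neg at h
  obtain ⟨d, _, _, h1, h2⟩ := key f hf h.1 h.2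
  linarith
end
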